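/- Let I = {i₁ < ⋯ < i_r} ⊆ {1, …, 2g+1}. Then in the Clifford algebra C(V): (1) (ε_{i₁}·ε_{i₂}·⋯·ε_{i_r})² = δ_I²·r_{I,I^c}, an equality of scalars in k ⊆ C(V); (2) (ε_{i₁}·⋯·ε_{i_r})·τ(ε_{i₁}·⋯·ε_{i_r}) = ∏_{j=1}^r f'(ω_{i_j}), where τ is the reversal anti-involution of C(V) and f' is the derivative of f. -/

import Mathlib

open Polynomial CliffordAlgebra


section AuxLemmas

variable {R A σ : Type*} [CommRing R] [Ring A] [Algebra R A]
variable (e : σ → A) (c : σ → R)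

lemma aux_prod_rev (hsq : ∀ i, e i * e i = algebraMap R A (c i)) :
    ∀ L : List σ, (L.map e).prod * ((L.map e).reverse).prod = algebraMap R A ((L.map c).prod)
  | [] => by simp
  | a :: L => by
    have IH := aux_prod_rev hsq L
    simp only [List.map_cons, List.prod_cons, List.reverse_cons, List.prod_append,
      List.prod_cons, List.prod_nil, mul_one]
    calc e a * (L.map e).prod * (((L.map e).reverse).prod * e a)
        = e a * ((L.map e).prod * ((L.map e).reverse).prod) * e a := by simp only [mul_assoc]
      _ = e a * algebraMap R A ((L.map c).prod) * e a := by rw [IH]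
      _ = algebraMap R A ((L.map c).prod) * (e a * e a) := by
          rw [← Algebra.commutes ((L.map c).prod) (e a), mul_assoc]
      _ = algebraMap R A (c a * (L.map c).prod) := by
          rw [hsq a, ← map_mul, mul_comm]

lemma aux_move (a : σ) :
    ∀ L : List σ, (∀ b ∈ L, e a * e b = -(e b * e a)) →
      (L.map e).prod * e a = algebraMap R A ((-1 : R) ^ L.length) * (e a * (L.map e).prod)
  | [], _ => by simp
  | b :: L, h => by
    have hb : e b * e a = -(e a * e b) := by rw [h b (by simp), neg_neg]
    have IH := aux_move a L (fun x hx => h x (by simp [hx]))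
    simp only [List.map_cons, List.prod_cons, List.length_cons]
    calc e b * (L.map e).prod * e a
        = e b * ((L.map e).prod * e a) := by rw [mul_assoc]
      _ = e b * (algebraMap R A ((-1 : R) ^ L.length) * (e a * (L.map e).prod)) := by rw [IH]
      _ = algebraMap R A ((-1 : R) ^ L.length) * (e b * (e a * (L.map e).prod)) := by
          rw [← mul_assoc, ← Algebra.commutes, mul_assoc]
      _ = algebraMap R A ((-1 : R) ^ L.length) * ((e b * e a) * (L.map e).prod) := by
          rw [mul_assoc]
      _ = algebraMap R A ((-1 : R) ^ L.length) * (-(1:R) • ((e a * e b) * (L.map e).prod)) := by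
          rw [hb]; simp
      _ = algebraMap R A ((-1 : R) ^ (L.length + 1)) * (e a * (e b * (L.map e).prod)) := by
          rw [mul_smul_comm, ← Algebra.smul_def, smul_smul, Algebra.smul_def, pow_succ, mul_assoc, mul_comm ((-1:R)^L.length)]

lemma aux_rev_sign :
    ∀ L : List σ, L.Pairwise (fun i j => e i * e j = -(e j * e i)) →
      ((L.map e).reverse).prod = algebraMap R A ((-1 : R) ^ (L.length.choose 2)) * (L.map e).prod
  | [], _ => by simp
  | a :: L, h => by
    obtain ⟨h1, h2⟩ := List.pairwise_cons.mp h
    have IH := aux_rev_sign L h2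
    simp only [List.map_cons, List.reverse_cons, List.prod_append, List.prod_cons,
      List.prod_nil, mul_one, List.length_cons]
    calc ((L.map e).reverse).prod * e a
        = algebraMap R A ((-1 : R) ^ (L.length.choose 2)) * ((L.map e).prod * e a) := by
          rw [IH, mul_assoc]
      _ = algebraMap R A ((-1 : R) ^ (L.length.choose 2)) *
            (algebraMap R A ((-1 : R) ^ L.length) * (e a * (L.map e).prod)) := by
          rw [aux_move (R := R) e a L h1]
      _ = algebraMap R A ((-1 : R) ^ ((L.length + 1).choose 2)) * (e a * (L.map e).prod) := by
          rw [← mul_assoc, ← map_mul, ← pow_add]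
          congr 2
          rw [Nat.choose_succ_succ, Nat.choose_one_right, add_comm]

lemma aux_sq (hsq : ∀ i, e i * e i = algebraMap R A (c i))
    (L : List σ) (h : L.Pairwise (fun i j => e i * e j = -(e j * e i))) :
    (L.map e).prod ^ 2 =
      algebraMap R A ((-1 : R) ^ (L.length.choose 2) * (L.map c).prod) := by
  have h1 := aux_prod_rev e c hsq L
  rw [aux_rev_sign (R := R) e L h] at h1
  have h2 : ((-1 : R) ^ (L.length.choose 2)) * ((-1 : R) ^ (L.length.choose 2)) = 1 := by
    rw [← pow_add, ← two_mul, pow_mul]; norm_num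
  calc (L.map e).prod ^ 2
      = algebraMap R A (((-1 : R) ^ (L.length.choose 2)) * ((-1 : R) ^ (L.length.choose 2)))
        * ((L.map e).prod * (L.map e).prod) := by rw [h2]; simp [pow_two]
    _ = algebraMap R A ((-1 : R) ^ (L.length.choose 2)) *
        ((L.map e).prod * (algebraMap R A ((-1 : R) ^ (L.length.choose 2)) * (L.map e).prod)) := by
        rw [map_mul (algebraMap R A), mul_assoc]
        congr 1
        conv_lhs => rw [← mul_assoc, Algebra.commutes, mul_assoc]
    _ = algebraMap R A ((-1 : R) ^ (L.length.choose 2)) * algebraMap R A ((L.map c).prod) := by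
        rw [h1]
    _ = _ := by rw [← map_mul]

end AuxLemmas



/-- Let `I = {i₁ < ⋯ < i_r} ⊆ {1, …, 2g+1}`.  Then in the Clifford algebra `C(V)`:
(1) `(ε_{i₁}⋯ε_{i_r})² = δ_I²·r_{I,Iᶜ}` (a scalar), where
`δ_I = ∏_{j<k}(ω_{i_k} − ω_{i_j})` and `r_{I,Iᶜ} = ∏_{i∈I, j∉I}(ω_i − ω_j)`;
(2) `(ε_{i₁}⋯ε_{i_r})·τ(ε_{i₁}⋯ε_{i_r}) = ∏_{j=1}^r f'(ω_{i_j})`, where `τ` is the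
reversal anti-involution of `C(V)`. -/
theorem stmt_15
    (k : Type*) [Field k] (h2 : (2 : k) ≠ 0)
    (g : ℕ) (hg : 1 ≤ g)
    (ω : Fin (2 * g + 1) → k) (hω : Function.Injective ω)
    (f : Polynomial k) (hf : f = ∏ m : Fin (2 * g + 1), (X - C (ω m)))
    -- `τQ` picks out the coefficient of `x^{2g}`, and `ψ(a,b) = τQ(ab)`:
    (τQ : AdjoinRoot f →ₗ[k] k)
    (hτQ : ∀ a : Fin (2 * g + 1) → k,
      τQ (∑ i : Fin (2 * g + 1), a i • AdjoinRoot.root f ^ (i : ℕ)) = a ⟨2 * g, by omega⟩)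
    (Q : QuadraticForm k (AdjoinRoot f)) (hQ : ∀ v : AdjoinRoot f, Q v = τQ (v * v))
    -- the elements `ε_i = ∏_{j ≠ i}(x − ω_j)`:
    (ε : Fin (2 * g + 1) → AdjoinRoot f)
    (hε : ∀ i, ε i = ∏ j ∈ Finset.univ.erase i,
      (AdjoinRoot.root f - algebraMap k (AdjoinRoot f) (ω j))) :
    ∀ I : Finset (Fin (2 * g + 1)),
      -- (1):
      (((I.sort (· ≤ ·)).map fun i => ι Q (ε i)).prod ^ 2 =
        algebraMap k (CliffordAlgebra Q)
          ((∏ a ∈ I, ∏ b ∈ I, if a < b then ω b - ω a else 1) ^ 2 *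
            ∏ a ∈ I, ∏ b ∈ Iᶜ, (ω a - ω b))) ∧
      -- (2):
      (((I.sort (· ≤ ·)).map fun i => ι Q (ε i)).prod *
          reverse (((I.sort (· ≤ ·)).map fun i => ι Q (ε i)).prod) =
        algebraMap k (CliffordAlgebra Q)
          (∏ i ∈ I, Polynomial.eval (ω i) (Polynomial.derivative f))) := by
  set rt : AdjoinRoot f := AdjoinRoot.root f with hrt
  set am : k →+* AdjoinRoot f := algebraMap k (AdjoinRoot f) with ham
  -- the polynomials P i and the scalars c i
  set Pc : Fin (2 * g + 1) → Polynomial k :=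
    fun i => ∏ j ∈ Finset.univ.erase i, (X - C (ω j)) with hPc
  set c : Fin (2 * g + 1) → k :=
    fun i => ∏ j ∈ Finset.univ.erase i, (ω i - ω j) with hc
  have hεP : ∀ i, ε i = Polynomial.aeval rt (Pc i) := by
    intro i
    rw [hε i, hPc]
    simp only [map_prod, map_sub, aeval_X, aeval_C]
    rfl
  have h_root : ∏ m : Fin (2 * g + 1), (rt - am (ω m)) = 0 := by
    have h1 : (Polynomial.aeval rt) f = 0 := by
      rw [hrt, AdjoinRoot.aeval_eq, AdjoinRoot.mk_self]
    have h2 : (Polynomial.aeval rt) (∏ m : Fin (2 * g + 1), (X - C (ω m))) = 0 := by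
      rw [← hf]; exact h1
    simp only [map_prod, map_sub, aeval_X, aeval_C] at h2
    rw [← h2]
  have h_ann : ∀ i, (rt - am (ω i)) * ε i = 0 := by
    intro i
    rw [hε i, Finset.mul_prod_erase Finset.univ (fun j => rt - am (ω j)) (Finset.mem_univ i), h_root]
  have h_orth : ∀ i j, i ≠ j → ε i * ε j = 0 := by
    intro i j hij
    have hj : j ∈ Finset.univ.erase i := Finset.mem_erase.2 ⟨hij.symm, Finset.mem_univ j⟩
    rw [hε i, ← Finset.mul_prod_erase _ _ hj]
    linear_combination (∏ m ∈ (Finset.univ.erase i).erase j, (rt - am (ω m))) * h_ann j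
  have h_eval : ∀ i, (Pc i).eval (ω i) = c i := by
    intro i; simp [hPc, hc, eval_prod]
  have h_sq : ∀ i, ε i * ε i = am (c i) * ε i := by
    intro i
    have hdvd : (X - C (ω i)) ∣ (Pc i - C (c i)) := by
      rw [dvd_iff_isRoot]
      simp [IsRoot, h_eval i]
    obtain ⟨q, hq⟩ := hdvd
    have h2 : ε i - am (c i) = (rt - am (ω i)) * Polynomial.aeval rt q := by
      have h3 := congrArg (Polynomial.aeval rt) hq
      simp only [map_sub, map_mul, aeval_C, aeval_X] at h3
      rw [hεP i]
      exact h3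
    have h4 : ε i * ε i - am (c i) * ε i = 0 := by
      calc ε i * ε i - am (c i) * ε i = (ε i - am (c i)) * ε i := by ring
        _ = ((rt - am (ω i)) * Polynomial.aeval rt q) * ε i := by rw [h2]
        _ = Polynomial.aeval rt q * ((rt - am (ω i)) * ε i) := by ring
        _ = 0 := by rw [h_ann i, mul_zero]
    exact sub_eq_zero.mp h4
  have h_mon : ∀ i, (Pc i).Monic := fun i =>
    monic_prod_of_monic _ _ fun j _ => monic_X_sub_C _
  have h_deg : ∀ i, (Pc i).natDegree = 2 * g := by
    intro i
    rw [hPc]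
    rw [natDegree_prod_of_monic _ _ fun j _ => monic_X_sub_C _]
    simp [natDegree_X_sub_C, Finset.card_erase_of_mem]
  have h_tau_aeval : ∀ p : Polynomial k, p.natDegree < 2 * g + 1 →
      τQ (Polynomial.aeval rt p) = p.coeff (2 * g) := by
    intro p hp
    rw [aeval_eq_sum_range' hp rt,
      ← Fin.sum_univ_eq_sum_range (fun i => p.coeff i • rt ^ i) (2 * g + 1)]
    exact hτQ (fun i => p.coeff i)
  have h_tau_eps : ∀ i, τQ (ε i) = 1 := by
    intro i
    rw [hεP i, h_tau_aeval _ (by rw [h_deg i]; omega), ← h_deg i]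
    exact (h_mon i).coeff_natDegree
  have hQε : ∀ i, Q (ε i) = c i := by
    intro i
    rw [hQ, h_sq i, ← Algebra.smul_def, map_smul, h_tau_eps i, smul_eq_mul, mul_one]
  have h_polar : ∀ i j, i ≠ j → QuadraticMap.polar Q (ε i) (ε j) = 0 := by
    intro i j hij
    have h0 : ε i * ε j = 0 := h_orth i j hij
    have h0' : ε j * ε i = 0 := h_orth j i hij.symm
    have hx : (ε i + ε j) * (ε i + ε j) = ε i * ε i + ε j * ε j := by
      have : (ε i + ε j) * (ε i + ε j) = ε i * ε i + ε j * ε j + (ε i * ε j + ε j * ε i) := by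
        ring
      rw [this, h0, h0', add_zero, add_zero]
    rw [QuadraticMap.polar, hQ, hQ, hQ, hx, map_add]
    ring
  set e : Fin (2 * g + 1) → CliffordAlgebra Q := fun i => ι Q (ε i) with he
  have hesq : ∀ i, e i * e i = algebraMap k (CliffordAlgebra Q) (c i) := by
    intro i; rw [he]; rw [ι_sq_scalar, hQε i]
  have hanti : ∀ i j, i ≠ j → e i * e j = -(e j * e i) := by
    intro i j hij
    have h1 := ι_mul_ι_add_swap (Q := Q) (ε i) (ε j)
    rw [h_polar i j hij, map_zero] at h1
    exact eq_neg_of_add_eq_zero_left h1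
  intro I
  set L : List (Fin (2 * g + 1)) := I.sort (· ≤ ·) with hL
  have hnodup : L.Nodup := I.sort_nodup _
  have hpair : L.Pairwise (fun i j => e i * e j = -(e j * e i)) :=
    hnodup.imp (fun h => hanti _ _ h)
  have hlen : L.length = I.card := Finset.length_sort _
  have hprodc : ∀ d : Fin (2 * g + 1) → k, (L.map d).prod = ∏ i ∈ I, d i := by
    intro d
    rw [Finset.prod_eq_multiset_prod, ← Finset.sort_eq (s := I) (r := (· ≤ ·)), Multiset.map_coe,
      Multiset.prod_coe]
  -- the two Clifford computations
  have key2 : ((L.map e).prod) *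
      reverse ((L.map e).prod) =
      algebraMap k (CliffordAlgebra Q) (∏ i ∈ I, c i) := by
    have hmm : (L.map e) = (L.map ε).map (ι Q) := by
      rw [List.map_map]; rfl
    rw [hmm, reverse_prod_map_ι, ← hmm]
    have := aux_prod_rev e c hesq L
    rw [hprodc c] at this
    exact this
  have key1 : ((L.map e).prod) ^ 2 =
      algebraMap k (CliffordAlgebra Q) ((-1 : k) ^ (I.card.choose 2) * ∏ i ∈ I, c i) := by
    have := aux_sq e c hesq L hpair
    rw [hprodc c, hlen] at this
    exact this

  -- derivative computation
  have h_der : ∀ i, Polynomial.eval (ω i) (Polynomial.derivative f) = c i := by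
    intro i
    have hfi : (X - C (ω i)) * Pc i = f := by
      rw [hf]
      simp only [hPc]
      exact Finset.mul_prod_erase Finset.univ (fun j => X - C (ω j)) (Finset.mem_univ i)
    rw [← hfi, derivative_mul, derivative_sub, derivative_X, derivative_C, sub_zero, one_mul]
    simp [h_eval i]
  refine ⟨?_, ?_⟩
  · -- part (1)
    rw [key1]
    congr 1
    -- now a pure field identity
    set D : k := ∏ a ∈ I, ∏ b ∈ I, if a < b then ω b - ω a else 1 with hD
    set Rr : k := ∏ a ∈ I, ∏ b ∈ Iᶜ, (ω a - ω b) with hRr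
    have hsplit : ∀ i ∈ I, c i =
        (∏ j ∈ I.erase i, (ω i - ω j)) * (∏ j ∈ Iᶜ, (ω i - ω j)) := by
      intro i hi
      have huni : (I.erase i) ∪ Iᶜ = Finset.univ.erase i := by
        ext j
        simp only [Finset.mem_union, Finset.mem_erase, Finset.mem_compl, Finset.mem_univ,
          and_true]
        constructor
        · rintro (⟨hne, _⟩ | hnot)
          · exact hne
          · exact fun h => hnot (h ▸ hi)
        · intro hne
          by_cases hj : j ∈ I
          · exact Or.inl ⟨hne, hj⟩
          · exact Or.inr hj
      have hdisj : Disjoint (I.erase i) Iᶜ :=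
        Disjoint.mono_left (Finset.erase_subset i I) disjoint_compl_right
      simp only [hc]
      rw [← huni, Finset.prod_union hdisj]
    have h1 : ∏ i ∈ I, c i =
        (∏ i ∈ I, ∏ j ∈ I.erase i, (ω i - ω j)) * Rr := by
      calc ∏ i ∈ I, c i
          = ∏ i ∈ I, ((∏ j ∈ I.erase i, (ω i - ω j)) * (∏ j ∈ Iᶜ, (ω i - ω j))) :=
            Finset.prod_congr rfl hsplit
        _ = _ := Finset.prod_mul_distrib
    have hpoint : ∀ i j : Fin (2 * g + 1),
        (if j ≠ i then (ω i - ω j) else 1) =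
        ((if i < j then (-1 : k) else 1) * (if i < j then (ω j - ω i) else 1)) *
          (if j < i then (ω i - ω j) else 1) := by
      intro i j
      rcases lt_trichotomy i j with h | h | h
      · rw [if_pos h.ne', if_pos h, if_pos h, if_neg (asymm h), mul_one]
        ring
      · rw [if_neg (by simp [h]), if_neg (by simp [h]), if_neg (by simp [h]),
          if_neg (by simp [h])]
        norm_num
      · rw [if_pos h.ne, if_neg (asymm h), if_neg (asymm h), if_pos h]
        norm_num
    have hAexp : (∏ i ∈ I, ∏ j ∈ I.erase i, (ω i - ω j)) =
        ((∏ i ∈ I, ∏ j ∈ I, if i < j then (-1 : k) else 1) * D) * D := by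
      have herase : ∀ i ∈ I, ∏ j ∈ I.erase i, (ω i - ω j) =
          ∏ j ∈ I, if j ≠ i then (ω i - ω j) else 1 := by
        intro i _
        rw [← Finset.filter_ne', Finset.prod_filter]
      calc (∏ i ∈ I, ∏ j ∈ I.erase i, (ω i - ω j))
          = ∏ i ∈ I, ∏ j ∈ I, (if j ≠ i then (ω i - ω j) else 1) :=
            Finset.prod_congr rfl herase
        _ = ∏ i ∈ I, ∏ j ∈ I,
              (((if i < j then (-1 : k) else 1) * (if i < j then (ω j - ω i) else 1)) *
                (if j < i then (ω i - ω j) else 1)) := by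
            exact Finset.prod_congr rfl fun i _ => Finset.prod_congr rfl fun j _ => hpoint i j
        _ = ∏ i ∈ I,
              (((∏ j ∈ I, if i < j then (-1 : k) else 1) *
                (∏ j ∈ I, if i < j then (ω j - ω i) else 1)) *
                (∏ j ∈ I, if j < i then (ω i - ω j) else 1)) :=
            Finset.prod_congr rfl fun i _ => by
              rw [Finset.prod_mul_distrib, Finset.prod_mul_distrib]
        _ = ((∏ i ∈ I, ∏ j ∈ I, if i < j then (-1 : k) else 1) *
              (∏ i ∈ I, ∏ j ∈ I, if i < j then (ω j - ω i) else 1)) *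
              (∏ i ∈ I, ∏ j ∈ I, if j < i then (ω i - ω j) else 1) := by
            rw [Finset.prod_mul_distrib, Finset.prod_mul_distrib]
        _ = ((∏ i ∈ I, ∏ j ∈ I, if i < j then (-1 : k) else 1) * D) * D := by
            have hBmid : (∏ i ∈ I, ∏ j ∈ I, if i < j then (ω j - ω i) else 1) = D := rfl
            have hB2 : (∏ i ∈ I, ∏ j ∈ I, if j < i then (ω i - ω j) else 1) = D := by
              rw [Finset.prod_comm]
            rw [hBmid, hB2]
    have hsign : (∏ i ∈ I, ∏ j ∈ I, if i < j then (-1 : k) else 1) =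
        (-1 : k) ^ (I.card.choose 2) := by
      rw [← Finset.prod_product' I I (fun i j => if i < j then (-1 : k) else 1)]
      rw [← Finset.prod_filter (fun p : Fin (2*g+1) × Fin (2*g+1) => p.1 < p.2)
        (fun _ => (-1 : k))]
      rw [Finset.prod_const]
      congr 1
      -- card of the filter is choose 2
      have swapcard : ((I ×ˢ I).filter fun p => p.1 < p.2).card =
          ((I ×ˢ I).filter fun p => p.2 < p.1).card := by
        apply Finset.card_bij (fun p _ => Prod.swap p)
        · intro p hp
          simp only [Finset.mem_filter, Finset.mem_product] at hp ⊢
          exact ⟨⟨hp.1.2, hp.1.1⟩, hp.2⟩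
        · intro a _ b _ h
          exact Prod.swap_injective h
        · intro b hb
          simp only [Finset.mem_filter, Finset.mem_product] at hb
          refine ⟨b.swap, ?_, ?_⟩
          · simp only [Finset.mem_filter, Finset.mem_product]
            exact ⟨⟨hb.1.2, hb.1.1⟩, hb.2⟩
          · simp
      have hunion : ((I ×ˢ I).filter fun p => p.1 < p.2) ∪
          ((I ×ˢ I).filter fun p => p.2 < p.1) = I.offDiag := by
        ext p
        simp only [Finset.mem_union, Finset.mem_filter, Finset.mem_product,
          Finset.mem_offDiag]
        constructor
        · rintro (⟨⟨h1, h2⟩, hlt⟩ | ⟨⟨h1, h2⟩, hlt⟩)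
          · exact ⟨h1, h2, ne_of_lt hlt⟩
          · exact ⟨h1, h2, (ne_of_lt hlt).symm⟩
        · rintro ⟨h1, h2, hne⟩
          rcases hne.lt_or_gt with h | h
          · exact Or.inl ⟨⟨h1, h2⟩, h⟩
          · exact Or.inr ⟨⟨h1, h2⟩, h⟩
      have hdisj2 : Disjoint ((I ×ˢ I).filter fun p => p.1 < p.2)
          ((I ×ˢ I).filter fun p => p.2 < p.1) := by
        rw [Finset.disjoint_left]
        intro p hp1 hp2
        simp only [Finset.mem_filter] at hp1 hp2
        exact absurd hp2.2 (asymm hp1.2)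
      have hcard : ((I ×ˢ I).filter fun p => p.1 < p.2).card +
          ((I ×ˢ I).filter fun p => p.2 < p.1).card = I.offDiag.card := by
        rw [← Finset.card_union_of_disjoint hdisj2, hunion]
      have hoff : I.offDiag.card = I.card * (I.card - 1) := by
        rw [Finset.offDiag_card]
        cases hcc : I.card with
        | zero => simp
        | succ n => simp [Nat.succ_sub_one, Nat.mul_succ, Nat.succ_mul]
      rw [Nat.choose_two_right]
      show ((I ×ˢ I).filter fun p => p.1 < p.2).card = I.card * (I.card - 1) / 2
      obtain ⟨P, hP⟩ : ∃ P, I.card * (I.card - 1) = P := ⟨_, rfl⟩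
      rw [hP] at hoff ⊢
      omega
    have hsq1 : ((-1 : k) ^ (I.card.choose 2)) * ((-1 : k) ^ (I.card.choose 2)) = 1 := by
      rw [← pow_add, ← two_mul, pow_mul]
      norm_num
    rw [h1, hAexp, hsign]
    linear_combination (D * D * Rr) * hsq1
  · -- part (2)
    rw [key2]
    congr 1
    exact Finset.prod_congr rfl fun i _ => (h_der i).symm
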